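/- Let $S$ be a finite set of points in the plane in which at most $\alpha |S|$ points are collinear for $\alpha = 2/3$ (i.e., $S$ is nondegenerate), with $|S| = n \ge 3$. Then, assuming Beck's theorem, $S$ determines $\Omega(n^3)$ nondegenerate triangles. -/

import Mathlib

/-- `L` is a line in the plane (as a set of points). -/
def IsLine (L : Set (Fin 2 → ℝ)) : Prop :=
  ∃ p v : Fin 2 → ℝ, v ≠ 0 ∧ L = {x | ∃ t : ℝ, x = p + t • v}

/-- Points of `S` collinear with two fixed distinct points form a collinear set. -/
lemma collinear_filter_aux (S : Set (Fin 2 → ℝ)) {p q : Fin 2 → ℝ} (hq : q ∈ S)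
    (hne : p ≠ q) :
    Collinear ℝ {x ∈ S | Collinear ℝ ({p, q, x} : Set (Fin 2 → ℝ))} := by
  rw [collinear_iff_exists_forall_eq_smul_vadd]
  refine ⟨p, q -ᵥ p, ?_⟩
  rintro x ⟨hxS, hx⟩
  have hmem : x ∈ line[ℝ, p, q] :=
    hx.mem_affineSpan_of_mem_of_ne (Set.mem_insert _ _)
      (Set.mem_insert_of_mem _ (Set.mem_insert _ _))
      (Set.mem_insert_of_mem _ (Set.mem_insert_of_mem _ rfl)) hne
  have hx' : (x -ᵥ p) +ᵥ p ∈ line[ℝ, p, q] := by simpa using hmem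
  rw [vadd_left_mem_affineSpan_pair] at hx'
  obtain ⟨r, hr⟩ := hx'
  exact ⟨r, by rw [hr]; simp⟩

/-- assuming Beck's theorem, a nondegenerate planar set of
`n ≥ 3` points (no more than `(2/3)·n` collinear) determines `Ω(n³)`
nondegenerate triangles. -/
theorem stmt17 (cB : ℝ) (hcB : 0 < cB)
    (hBeck : ∀ (P : Set (Fin 2 → ℝ)), P.Finite → ∀ ℓ : ℕ,
      (∀ T : Set (Fin 2 → ℝ), T ⊆ P → Collinear ℝ T → T.ncard ≤ ℓ) →
      cB * (P.ncard : ℝ) * ((P.ncard - ℓ : ℕ) : ℝ) ≤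
        ({L : Set (Fin 2 → ℝ) | IsLine L ∧ 2 ≤ (P ∩ L).ncard}.ncard : ℝ)) :
    ∃ c : ℝ, 0 < c ∧
      ∀ (n : ℕ) (S : Set (Fin 2 → ℝ)), S.Finite → S.ncard = n → 3 ≤ n →
        (∀ T : Set (Fin 2 → ℝ), T ⊆ S → Collinear ℝ T →
          (T.ncard : ℝ) ≤ 2 / 3 * n) →
        c * (n : ℝ) ^ 3 ≤
          ({T : Set (Fin 2 → ℝ) | T ⊆ S ∧ T.ncard = 3 ∧
            ¬ Collinear ℝ T}.ncard : ℝ) := by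
  classical
  refine ⟨1/243, by norm_num, ?_⟩
  intro n S hS hcard hn hcol
  set s : Finset (Fin 2 → ℝ) := hS.toFinset with hs
  have hsS : (s : Set (Fin 2 → ℝ)) = S := hS.coe_toFinset
  have hscard : s.card = n := by
    rw [← hcard, ← Set.ncard_coe_finset, hsS]
  -- the finset of noncollinear triples extending a pair
  set fib : (Fin 2 → ℝ) × (Fin 2 → ℝ) → Finset (Fin 2 → ℝ) :=
    fun pq => s.filter (fun r => ¬ Collinear ℝ ({pq.1, pq.2, r} : Set (Fin 2 → ℝ)))
    with hfibdef
  -- ordered noncollinear triples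
  set OT : Finset ((_ : (Fin 2 → ℝ) × (Fin 2 → ℝ)) × (Fin 2 → ℝ)) :=
    s.offDiag.sigma fib with hOTdef
  -- triangles as finsets
  set F : Finset (Finset (Fin 2 → ℝ)) :=
    (s.powersetCard 3).filter (fun t => ¬ Collinear ℝ (↑t : Set (Fin 2 → ℝ))) with hFdef
  -- per-pair lower bound
  have key : ∀ pq ∈ s.offDiag, (n : ℝ) / 3 ≤ ((fib pq).card : ℝ) := by
    rintro ⟨p, q⟩ hpq
    obtain ⟨hp, hq, hne⟩ := Finset.mem_offDiag.mp hpq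
    set C : Finset (Fin 2 → ℝ) :=
      s.filter (fun r => Collinear ℝ ({p, q, r} : Set (Fin 2 → ℝ))) with hCdef
    have hCset : (↑C : Set (Fin 2 → ℝ)) =
        {x ∈ S | Collinear ℝ ({p, q, x} : Set (Fin 2 → ℝ))} := by
      ext x; simp [hCdef, ← hsS]
    have hqS : q ∈ S := by rw [← hsS]; exact hq
    have hCcoll : Collinear ℝ (↑C : Set (Fin 2 → ℝ)) := by
      rw [hCset]; exact collinear_filter_aux S hqS hne
    have hCsub : (↑C : Set (Fin 2 → ℝ)) ⊆ S := by
      rw [hCset]; exact fun x hx => hx.1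
    have hCle : ((C.card : ℝ)) ≤ 2 / 3 * n := by
      have := hcol _ hCsub hCcoll
      rwa [Set.ncard_coe_finset] at this
    have hsplit : C.card + (fib (p, q)).card = n := by
      rw [← hscard, hCdef, hfibdef]
      exact Finset.card_filter_add_card_filter_not _
    have : ((fib (p, q)).card : ℝ) = (n : ℝ) - C.card := by
      have := congrArg (fun m : ℕ => (m : ℝ)) hsplit
      push_cast at this
      linarith
    rw [this]
    linarith
  -- lower bound on ordered triples
  have hOTcard : OT.card = ∑ pq ∈ s.offDiag, (fib pq).card := Finset.card_sigma _ _
  have hoff : s.offDiag.card = n * n - n := by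
    rw [Finset.offDiag_card, hscard]
  have hOTlow : (n : ℝ) * ((n : ℝ) * (n : ℝ) - n) / 3 ≤ (OT.card : ℝ) := by
    have h1 : s.offDiag.card • ((n : ℝ) / 3) ≤ ∑ pq ∈ s.offDiag, ((fib pq).card : ℝ) :=
      Finset.card_nsmul_le_sum _ _ _ key
    have h2 : ((OT.card : ℝ)) = ∑ pq ∈ s.offDiag, ((fib pq).card : ℝ) := by
      rw [hOTcard]; push_cast; ring
    have h3 : ((s.offDiag.card : ℝ)) = (n : ℝ) * n - n := by
      rw [hoff]
      have : n ≤ n * n := Nat.le_mul_of_pos_left n (by omega)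
      push_cast [Nat.cast_sub this]
      ring
    rw [h2]
    calc (n : ℝ) * ((n : ℝ) * (n : ℝ) - n) / 3
        = ((n : ℝ) * n - n) * ((n : ℝ) / 3) := by ring
      _ = s.offDiag.card • ((n : ℝ) / 3) := by rw [nsmul_eq_mul, h3]
      _ ≤ _ := h1
  -- map ordered triples to triangles
  set f : ((_ : (Fin 2 → ℝ) × (Fin 2 → ℝ)) × (Fin 2 → ℝ)) → Finset (Fin 2 → ℝ) :=
    fun x => {x.1.1, x.1.2, x.2} with hfdef
  have hmemOT : ∀ x ∈ OT, x.1.1 ∈ s ∧ x.1.2 ∈ s ∧ x.2 ∈ s ∧ x.1.1 ≠ x.1.2 ∧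
      x.2 ≠ x.1.1 ∧ x.2 ≠ x.1.2 ∧
      ¬ Collinear ℝ ({x.1.1, x.1.2, x.2} : Set (Fin 2 → ℝ)) := by
    rintro ⟨⟨p, q⟩, r⟩ hx
    rw [hOTdef, Finset.mem_sigma] at hx
    obtain ⟨hpq, hr⟩ := hx
    obtain ⟨hp, hq, hne⟩ := Finset.mem_offDiag.mp hpq
    rw [hfibdef, Finset.mem_filter] at hr
    obtain ⟨hrs, hnc⟩ := hr
    dsimp only at hp hq hne hrs hnc ⊢
    refine ⟨hp, hq, hrs, hne, ?_, ?_, hnc⟩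
    · rintro rfl
      apply hnc
      apply Collinear.subset _ (collinear_pair ℝ r q)
      intro x hx
      simp only [Set.mem_insert_iff, Set.mem_singleton_iff] at hx ⊢
      tauto
    · rintro rfl
      apply hnc
      apply Collinear.subset _ (collinear_pair ℝ p r)
      intro x hx
      simp only [Set.mem_insert_iff, Set.mem_singleton_iff] at hx ⊢
      tauto
  have himg : OT.image f ⊆ F := by
    intro t ht
    obtain ⟨x, hx, rfl⟩ := Finset.mem_image.mp ht
    obtain ⟨hp, hq, hr, hne1, hne2, hne3, hnc⟩ := hmemOT x hx
    rw [hFdef, Finset.mem_filter, Finset.mem_powersetCard]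
    refine ⟨⟨?_, ?_⟩, ?_⟩
    · intro y hy
      simp only [hfdef, Finset.mem_insert, Finset.mem_singleton] at hy
      rcases hy with rfl | rfl | rfl <;> assumption
    · rw [hfdef]
      rw [Finset.card_eq_three]
      exact ⟨x.1.1, x.1.2, x.2, hne1, Ne.symm hne2, Ne.symm hne3, rfl⟩
    · intro hcl
      apply hnc
      have : (↑({x.1.1, x.1.2, x.2} : Finset (Fin 2 → ℝ)) : Set (Fin 2 → ℝ)) =
          ({x.1.1, x.1.2, x.2} : Set (Fin 2 → ℝ)) := by simp
      rwa [hfdef, this] at hcl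
  have hfiber : ∀ t ∈ OT.image f, (OT.filter (fun x => f x = t)).card ≤ 27 := by
    intro t ht
    have ht3 : t.card = 3 := by
      have := himg ht
      rw [hFdef, Finset.mem_filter, Finset.mem_powersetCard] at this
      exact this.1.2
    have hle : (OT.filter (fun x => f x = t)).card ≤ ((t ×ˢ t) ×ˢ t).card := by
      apply Finset.card_le_card_of_injOn (fun x => ((x.1.1, x.1.2), x.2))
      · intro x hx
        rw [Finset.coe_filter] at hx
        have hmem : ∀ y ∈ (f x), y ∈ t := by rw [hx.2]; exact fun y hy => hy
        have h1 : x.1.1 ∈ t := hmem _ (by simp [hfdef])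
        have h2 : x.1.2 ∈ t := hmem _ (by simp [hfdef])
        have h3 : x.2 ∈ t := hmem _ (by simp [hfdef])
        simp [Finset.mem_product, h1, h2, h3]
      · rintro ⟨⟨a, b⟩, c⟩ _ ⟨⟨a', b'⟩, c'⟩ _ h
        simp only [Prod.mk.injEq] at h
        obtain ⟨⟨rfl, rfl⟩, rfl⟩ := h
        rfl
    calc (OT.filter (fun x => f x = t)).card ≤ ((t ×ˢ t) ×ˢ t).card := hle
      _ = 27 := by simp [Finset.card_product, ht3]
  have hcount : OT.card ≤ 27 * F.card := by
    calc OT.card ≤ 27 * (OT.image f).card := Finset.card_le_mul_card_image _ 27 hfiber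
      _ ≤ 27 * F.card := Nat.mul_le_mul_left _ (Finset.card_le_card himg)
  -- identify the set of triangles with F
  have hsetF : {T : Set (Fin 2 → ℝ) | T ⊆ S ∧ T.ncard = 3 ∧ ¬ Collinear ℝ T} =
      ↑(F.image (fun t : Finset (Fin 2 → ℝ) => (↑t : Set (Fin 2 → ℝ)))) := by
    ext T
    simp only [Set.mem_setOf_eq, Finset.coe_image, Set.mem_image, Finset.mem_coe]
    constructor
    · rintro ⟨hTS, hT3, hTnc⟩
      have hTfin : T.Finite := hS.subset hTS
      refine ⟨hTfin.toFinset, ?_, hTfin.coe_toFinset⟩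
      rw [hFdef, Finset.mem_filter, Finset.mem_powersetCard]
      refine ⟨⟨?_, ?_⟩, ?_⟩
      · intro y hy
        rw [← hsS] at hTS
        exact hTS (hTfin.mem_toFinset.mp hy)
      · rw [← Set.ncard_eq_toFinset_card T hTfin, hT3]
      · rwa [hTfin.coe_toFinset]
    · rintro ⟨t, ht, rfl⟩
      rw [hFdef, Finset.mem_filter, Finset.mem_powersetCard] at ht
      obtain ⟨⟨hts, ht3⟩, htnc⟩ := ht
      refine ⟨?_, ?_, htnc⟩
      · rw [← hsS]; exact fun y hy => hts hy
      · rw [Set.ncard_coe_finset, ht3]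
  have hncard : ({T : Set (Fin 2 → ℝ) | T ⊆ S ∧ T.ncard = 3 ∧
      ¬ Collinear ℝ T}.ncard : ℝ) = (F.card : ℝ) := by
    rw [hsetF, Set.ncard_coe_finset,
      Finset.card_image_of_injective _ Finset.coe_injective]
  -- final arithmetic
  rw [hncard]
  have hOT27 : (OT.card : ℝ) ≤ 27 * (F.card : ℝ) := by exact_mod_cast hcount
  have hn3 : (3 : ℝ) ≤ (n : ℝ) := by exact_mod_cast hn
  nlinarith [hOTlow, hOT27, hn3, sq_nonneg ((n : ℝ))]
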